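/- Let λ ≥ 1, and define l'_n := λ l_n and r'_n := λ r_n for every n. Let Γ_{nm}(h) and K be built from ({l_n},{r_n}) and Γ'_{nm}(h) and K' be built (by the same formulas) from ({l'_n},{r'_n}). If K is finite, then K' ≤ λ K + (1 + λ) K^λ. -/

import Mathlib

/-- For a real number `x`, its positive part `x₊ = max {x, 0}`. -/
noncomputable def ppart (x : ℝ) : ℝ := max x 0

/-- `Δ(k) = e^{-l_k} + e^{-l_{k+1}} + e^{-(1/2)(l_k + l_{k+1} - r_k)₊} + (r_k - l_k - l_{k+1})₊`. -/
noncomputable def DeltaF (l r : ℕ → ℝ) (k : ℕ) : ℝ :=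
  Real.exp (-l k) + Real.exp (-l (k + 1)) +
    Real.exp (-(1/2) * ppart (l k + l (k + 1) - r k)) + ppart (r k - l k - l (k + 1))

/-- The function `Γ_{nm}(h)` associated to the sequences `{l_n}` and `{r_n}`. -/
noncomputable def GammaF (l r : ℕ → ℝ) (n m : ℕ) (h : ℝ) : ℝ :=
  if m < n then
    (if l m ≤ h then
      ppart (r m + h - l (m + 1)) + Real.exp h * ∑ k ∈ Finset.Icc (m + 1) (n - 1), DeltaF l r k
    else
      l m - h + Real.exp h * ∑ k ∈ Finset.Icc m (n - 1), DeltaF l r k)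
  else if m = n then min h (l n - h)
  else
    (if l m ≤ h then
      ppart (r (m - 1) + h - l (m - 1)) + Real.exp h * ∑ k ∈ Finset.Icc n (m - 2), DeltaF l r k
    else
      l m - h + Real.exp h * ∑ k ∈ Finset.Icc n (m - 1), DeltaF l r k)

/-- `A_n(h)`: the largest positive integer `m < n` with `l_m ≤ h`, or `1` if there is none. -/
noncomputable def AFun (l : ℕ → ℝ) (n : ℕ) (h : ℝ) : ℕ :=
  sSup ({1} ∪ {m : ℕ | 1 ≤ m ∧ m < n ∧ l m ≤ h})

/-- `B_n(h)`: the smallest integer `m > n` with `l_m ≤ h`, or `∞` if there is none. -/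
noncomputable def BFun (l : ℕ → ℝ) (n : ℕ) (h : ℝ) : ℕ∞ :=
  sInf {x : ℕ∞ | ∃ m : ℕ, x = (m : ℕ∞) ∧ n < m ∧ l m ≤ h}

/-- `inf_{m ≥ 1} Γ_{nm}(h)`. -/
noncomputable def infGammaF (l r : ℕ → ℝ) (n : ℕ) (h : ℝ) : ℝ :=
  sInf {x : ℝ | ∃ m : ℕ, 1 ≤ m ∧ x = GammaF l r n m h}

/-- The set whose supremum is `K = sup_{n ≥ 1} sup_{h ∈ [0, l_n]} inf_{m ≥ 1} Γ_{nm}(h)`. -/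
def KSetF (l r : ℕ → ℝ) : Set ℝ :=
  {x : ℝ | ∃ n : ℕ, 1 ≤ n ∧ ∃ h : ℝ, 0 ≤ h ∧ h ≤ l n ∧ x = infGammaF l r n h}

open Filter Topology

section AuxLemmas

lemma ppart_nonneg (x : ℝ) : 0 ≤ ppart x := le_max_right _ _

lemma ppart_mul (c x : ℝ) (hc : 0 ≤ c) : ppart (c * x) = c * ppart x := by
  simp [ppart, mul_max_of_nonneg _ _ hc]

lemma add_rpow_le (a b p : ℝ) (ha : 0 ≤ a) (hb : 0 ≤ b) (hp : 1 ≤ p) :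
    a ^ p + b ^ p ≤ (a + b) ^ p := by
  have h := NNReal.coe_le_coe.2 (NNReal.add_rpow_le_rpow_add a.toNNReal b.toNNReal hp)
  simpa only [NNReal.coe_add, NNReal.coe_rpow, Real.coe_toNNReal a ha,
    Real.coe_toNNReal b hb] using h

lemma sum_rpow_le (s : Finset ℕ) (f : ℕ → ℝ) (hf : ∀ k ∈ s, 0 ≤ f k) (p : ℝ) (hp : 1 ≤ p) :
    ∑ k ∈ s, f k ^ p ≤ (∑ k ∈ s, f k) ^ p := by
  classical
  induction s using Finset.cons_induction with
  | empty => simp [Real.zero_rpow (by linarith : p ≠ 0)]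
  | cons a s ha ih =>
    rw [Finset.sum_cons, Finset.sum_cons]
    have h1 : ∑ k ∈ s, f k ^ p ≤ (∑ k ∈ s, f k) ^ p :=
      ih (fun k hk => hf k (Finset.mem_cons_of_mem hk))
    have h2 : f a ^ p + (∑ k ∈ s, f k) ^ p ≤ (f a + ∑ k ∈ s, f k) ^ p :=
      add_rpow_le _ _ p (hf a (Finset.mem_cons_self a s))
        (Finset.sum_nonneg fun k hk => hf k (Finset.mem_cons_of_mem hk)) hp
    linarith

lemma key_ineq (u a b c p lam : ℝ) (hu : 1 ≤ u) (ha : 0 ≤ a) (hb : 0 ≤ b) (hc : 0 ≤ c)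
    (hp : 0 ≤ p) (hcp : p ≠ 0 → c = 1) (hlam : 1 ≤ lam) :
    u ^ lam * (a ^ lam + b ^ lam + c ^ lam + lam * p) ≤ (u * (a + b + c + p)) ^ lam := by
  have hu0 : (0:ℝ) ≤ u := by linarith
  have step : u ^ lam * c ^ lam + u ^ lam * (lam * p) ≤ (u * (c + p)) ^ lam := by
    rcases eq_or_lt_of_le hp with hp0 | hp0
    · rw [← hp0, ← Real.mul_rpow hu0 hc]
      simp
    · have hc1 : c = 1 := hcp (ne_of_gt hp0)
      rw [hc1]
      have bern : 1 + lam * p ≤ (1 + p) ^ lam :=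
        one_add_mul_self_le_rpow_one_add (by linarith) hlam
      calc u ^ lam * (1:ℝ) ^ lam + u ^ lam * (lam * p) = u ^ lam * (1 + lam * p) := by
              rw [Real.one_rpow]; ring
        _ ≤ u ^ lam * (1 + p) ^ lam := by
              apply mul_le_mul_of_nonneg_left bern (Real.rpow_nonneg hu0 lam)
        _ = (u * (1 + p)) ^ lam := (Real.mul_rpow hu0 (by linarith)).symm
  have hA : u ^ lam * a ^ lam = (u * a) ^ lam := (Real.mul_rpow hu0 ha).symm
  have hB : u ^ lam * b ^ lam = (u * b) ^ lam := (Real.mul_rpow hu0 hb).symm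
  have h3 : (u * a) ^ lam + (u * b) ^ lam + (u * (c + p)) ^ lam ≤
      (u * a + u * b + u * (c + p)) ^ lam := by
    have t1 : (u * a) ^ lam + (u * b) ^ lam ≤ (u * a + u * b) ^ lam :=
      add_rpow_le _ _ lam (by positivity) (by positivity) hlam
    have t2 : (u * a + u * b) ^ lam + (u * (c + p)) ^ lam ≤
        (u * a + u * b + u * (c + p)) ^ lam :=
      add_rpow_le _ _ lam (by positivity) (by positivity) hlam
    linarith
  have heq : u * a + u * b + u * (c + p) = u * (a + b + c + p) := by ring
  rw [heq] at h3
  have expand : u ^ lam * (a ^ lam + b ^ lam + c ^ lam + lam * p) =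
      u ^ lam * a ^ lam + u ^ lam * b ^ lam + (u ^ lam * c ^ lam + u ^ lam * (lam * p)) := by
    ring
  rw [expand, hA, hB]
  linarith

lemma DeltaF_nonneg (l r : ℕ → ℝ) (k : ℕ) : 0 ≤ DeltaF l r k := by
  unfold DeltaF
  have := Real.exp_pos (-l k)
  have := Real.exp_pos (-l (k + 1))
  have := Real.exp_pos (-(1/2) * ppart (l k + l (k + 1) - r k))
  have := ppart_nonneg (r k - l k - l (k + 1))
  linarith

lemma delta_scale (l r : ℕ → ℝ) (lam : ℝ) (hlam : 1 ≤ lam) (u : ℝ) (hu : 1 ≤ u) (k : ℕ) :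
    u ^ lam * DeltaF (fun i => lam * l i) (fun i => lam * r i) k ≤
      (u * DeltaF l r k) ^ lam := by
  have hlam0 : (0:ℝ) ≤ lam := by linarith
  set a := Real.exp (-l k) with ha
  set b := Real.exp (-l (k + 1)) with hb
  set c := Real.exp (-(1/2) * ppart (l k + l (k + 1) - r k)) with hc
  set p := ppart (r k - l k - l (k + 1)) with hp
  have hD' : DeltaF (fun i => lam * l i) (fun i => lam * r i) k =
      a ^ lam + b ^ lam + c ^ lam + lam * p := by
    unfold DeltaF
    have e1 : Real.exp (-(lam * l k)) = a ^ lam := by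
      rw [ha, ← Real.exp_mul]; ring_nf
    have e2 : Real.exp (-(lam * l (k + 1))) = b ^ lam := by
      rw [hb, ← Real.exp_mul]; ring_nf
    have e3 : Real.exp (-(1/2) * ppart (lam * l k + lam * l (k + 1) - lam * r k)) =
        c ^ lam := by
      have : lam * l k + lam * l (k + 1) - lam * r k = lam * (l k + l (k + 1) - r k) := by ring
      rw [this, ppart_mul _ _ hlam0, hc, ← Real.exp_mul]; ring_nf
    have e4 : ppart (lam * r k - lam * l k - lam * l (k + 1)) = lam * p := by
      have : lam * r k - lam * l k - lam * l (k + 1) = lam * (r k - l k - l (k + 1)) := by ring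
      rw [this, ppart_mul _ _ hlam0, hp]
    rw [e1, e2, e3, e4]
  have hD : DeltaF l r k = a + b + c + p := rfl
  rw [hD', hD]
  apply key_ineq u a b c p lam hu (Real.exp_pos _).le (Real.exp_pos _).le (Real.exp_pos _).le
    (ppart_nonneg _) ?_ hlam
  intro hpne
  have hppos : 0 < r k - l k - l (k + 1) := by
    by_contra hcon
    push_neg at hcon
    exact hpne (by rw [hp]; simp [ppart, max_eq_right hcon])
  have : ppart (l k + l (k + 1) - r k) = 0 := by
    simp [ppart, max_eq_right (by linarith : l k + l (k + 1) - r k ≤ 0)]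
  rw [hc, this]
  simp

lemma sumD_nonneg (l r : ℕ → ℝ) (s : Finset ℕ) (h : ℝ) :
    0 ≤ Real.exp h * ∑ k ∈ s, DeltaF l r k :=
  mul_nonneg (Real.exp_pos h).le (Finset.sum_nonneg fun k _ => DeltaF_nonneg l r k)

lemma gamma_nonneg (l r : ℕ → ℝ) (n m : ℕ) (h : ℝ) (hh : 0 ≤ h) (hhn : h ≤ l n) :
    0 ≤ GammaF l r n m h := by
  unfold GammaF
  split_ifs with h1 h2 h3 h4
  · exact add_nonneg (ppart_nonneg _) (sumD_nonneg l r _ h)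
  · have := sumD_nonneg l r (Finset.Icc m (n - 1)) h
    push_neg at h2
    linarith
  · exact le_min hh (by linarith)
  · exact add_nonneg (ppart_nonneg _) (sumD_nonneg l r _ h)
  · have := sumD_nonneg l r (Finset.Icc n (m - 1)) h
    push_neg at h4
    linarith

lemma exp_mul_sum_le (l r : ℕ → ℝ) (lam : ℝ) (hlam : 1 ≤ lam) (h₀ : ℝ) (hh0 : 0 ≤ h₀)
    (s : Finset ℕ) :
    Real.exp (lam * h₀) * ∑ k ∈ s, DeltaF (fun i => lam * l i) (fun i => lam * r i) k ≤
      (Real.exp h₀ * ∑ k ∈ s, DeltaF l r k) ^ lam := by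
  set u := Real.exp h₀ with hu
  have hu1 : 1 ≤ u := Real.one_le_exp hh0
  have he : Real.exp (lam * h₀) = u ^ lam := by rw [hu, mul_comm, Real.exp_mul]
  rw [he, Finset.mul_sum, Finset.mul_sum]
  have t1 : ∑ k ∈ s, u ^ lam * DeltaF (fun i => lam * l i) (fun i => lam * r i) k
      ≤ ∑ k ∈ s, (u * DeltaF l r k) ^ lam :=
    Finset.sum_le_sum fun k _ => delta_scale l r lam hlam u hu1 k
  have t2 : ∑ k ∈ s, (u * DeltaF l r k) ^ lam ≤ (∑ k ∈ s, u * DeltaF l r k) ^ lam :=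
    sum_rpow_le s _ (fun k _ => mul_nonneg (by linarith) (DeltaF_nonneg l r k)) lam hlam
  exact le_trans t1 t2

lemma gamma_scale (l r : ℕ → ℝ) (lam : ℝ) (hlam : 1 ≤ lam) (n m : ℕ) (h₀ : ℝ)
    (hh0 : 0 ≤ h₀) (hhn : h₀ ≤ l n) :
    GammaF (fun k => lam * l k) (fun k => lam * r k) n m (lam * h₀) ≤
      lam * GammaF l r n m h₀ + GammaF l r n m h₀ ^ lam := by
  have hlam0 : (0:ℝ) < lam := by linarith
  simp only [GammaF, mul_le_mul_iff_right₀ hlam0]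
  rcases lt_trichotomy m n with h1 | h1 | h1
  · simp only [if_pos h1]
    by_cases h2 : l m ≤ h₀
    · simp only [if_pos h2]
      set P := ppart (r m + h₀ - l (m + 1)) with hP
      set S := Real.exp h₀ * ∑ k ∈ Finset.Icc (m + 1) (n - 1), DeltaF l r k with hS
      have e : lam * r m + lam * h₀ - lam * l (m + 1) = lam * (r m + h₀ - l (m + 1)) := by ring
      rw [e, ppart_mul _ _ hlam0.le, ← hP]
      have h3 := exp_mul_sum_le l r lam hlam h₀ hh0 (Finset.Icc (m + 1) (n - 1))
      rw [← hS] at h3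
      have hPn : 0 ≤ P := ppart_nonneg _
      have hSn : 0 ≤ S := sumD_nonneg l r _ h₀
      have h4 : S ^ lam ≤ (P + S) ^ lam :=
        Real.rpow_le_rpow hSn (by linarith) hlam0.le
      nlinarith
    · simp only [if_neg h2]
      push_neg at h2
      set S := Real.exp h₀ * ∑ k ∈ Finset.Icc m (n - 1), DeltaF l r k with hS
      have h3 := exp_mul_sum_le l r lam hlam h₀ hh0 (Finset.Icc m (n - 1))
      rw [← hS] at h3
      have hSn : 0 ≤ S := sumD_nonneg l r _ h₀
      have h4 : S ^ lam ≤ (l m - h₀ + S) ^ lam :=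
        Real.rpow_le_rpow hSn (by linarith) hlam0.le
      nlinarith
  · subst h1
    simp only [lt_irrefl, if_neg, if_pos rfl, ite_false, ite_true]
    have e : lam * l m - lam * h₀ = lam * (l m - h₀) := by ring
    rw [e, ← mul_min_of_nonneg _ _ hlam0.le]
    have h0 : 0 ≤ min h₀ (l m - h₀) := le_min hh0 (by linarith)
    have := Real.rpow_nonneg h0 lam
    linarith
  · have hn1 : ¬ m < n := by omega
    have hn2 : m ≠ n := by omega
    simp only [if_neg hn1, if_neg hn2]
    by_cases h2 : l m ≤ h₀
    · simp only [if_pos h2]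
      set P := ppart (r (m - 1) + h₀ - l (m - 1)) with hP
      set S := Real.exp h₀ * ∑ k ∈ Finset.Icc n (m - 2), DeltaF l r k with hS
      have e : lam * r (m - 1) + lam * h₀ - lam * l (m - 1) =
          lam * (r (m - 1) + h₀ - l (m - 1)) := by ring
      rw [e, ppart_mul _ _ hlam0.le, ← hP]
      have h3 := exp_mul_sum_le l r lam hlam h₀ hh0 (Finset.Icc n (m - 2))
      rw [← hS] at h3
      have hPn : 0 ≤ P := ppart_nonneg _
      have hSn : 0 ≤ S := sumD_nonneg l r _ h₀
      have h4 : S ^ lam ≤ (P + S) ^ lam :=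
        Real.rpow_le_rpow hSn (by linarith) hlam0.le
      nlinarith
    · simp only [if_neg h2]
      push_neg at h2
      set S := Real.exp h₀ * ∑ k ∈ Finset.Icc n (m - 1), DeltaF l r k with hS
      have h3 := exp_mul_sum_le l r lam hlam h₀ hh0 (Finset.Icc n (m - 1))
      rw [← hS] at h3
      have hSn : 0 ≤ S := sumD_nonneg l r _ h₀
      have h4 : S ^ lam ≤ (l m - h₀ + S) ^ lam :=
        Real.rpow_le_rpow hSn (by linarith) hlam0.le
      nlinarith

end AuxLemmas

/-- Let `λ ≥ 1` and define `l'_n := λ l_n`, `r'_n := λ r_n`. If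
`K = sup_{n ≥ 1} sup_{h ∈ [0, l_n]} inf_{m ≥ 1} Γ_{nm}(h)` is finite, then
`K' ≤ λ K + (1 + λ) K^λ`, where `K'` is built by the same formulas from `({l'_n}, {r'_n})`
(the bound on `K'` is expressed by bounding each `inf_{m ≥ 1} Γ'_{nm}(h)` for `n ≥ 1`,
`h ∈ [0, l'_n]`). -/
theorem stmt18 (l r : ℕ → ℝ) (hl : ∀ n : ℕ, 1 ≤ n → 0 < l n)
    (hr : ∀ n : ℕ, 1 ≤ n → 0 ≤ r n) (lam : ℝ) (hlam : 1 ≤ lam)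
    (hbdd : BddAbove (KSetF l r)) :
    ∀ n : ℕ, 1 ≤ n → ∀ h : ℝ, 0 ≤ h → h ≤ lam * l n →
      infGammaF (fun k => lam * l k) (fun k => lam * r k) n h ≤
        lam * sSup (KSetF l r) + (1 + lam) * sSup (KSetF l r) ^ lam := by
  intro n hn h hh hhl
  have hlam0 : (0:ℝ) < lam := by linarith
  set h₀ := h / lam with hh₀def
  have hlh : lam * h₀ = h := by
    rw [hh₀def, mul_div_cancel₀ _ (ne_of_gt hlam0)]
  have hh0 : 0 ≤ h₀ := div_nonneg hh hlam0.le
  have hhn : h₀ ≤ l n := by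
    rw [hh₀def, div_le_iff₀ hlam0]
    linarith
  set S₀ := {x : ℝ | ∃ m : ℕ, 1 ≤ m ∧ x = GammaF l r n m h₀} with hS₀def
  have hS₀ne : S₀.Nonempty := ⟨GammaF l r n n h₀, n, hn, rfl⟩
  have hS₀bdd : BddBelow S₀ := by
    refine ⟨0, ?_⟩
    rintro x ⟨m, hm, rfl⟩
    exact gamma_nonneg l r n m h₀ hh0 hhn
  have hIS : infGammaF l r n h₀ = sInf S₀ := rfl
  set I := infGammaF l r n h₀ with hI
  have hImem : I ∈ KSetF l r := ⟨n, hn, h₀, hh0, hhn, rfl⟩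
  have hIK : I ≤ sSup (KSetF l r) := le_csSup hbdd hImem
  have hI0 : 0 ≤ I := by
    rw [hIS]
    apply le_csInf hS₀ne
    rintro x ⟨m, hm, rfl⟩
    exact gamma_nonneg l r n m h₀ hh0 hhn
  set S' := {x : ℝ | ∃ m : ℕ, 1 ≤ m ∧
      x = GammaF (fun k => lam * l k) (fun k => lam * r k) n m h} with hS'def
  have hIS' : infGammaF (fun k => lam * l k) (fun k => lam * r k) n h = sInf S' := rfl
  have hS'bdd : BddBelow S' := by
    refine ⟨0, ?_⟩
    rintro x ⟨m, hm, rfl⟩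
    exact gamma_nonneg (fun k => lam * l k) (fun k => lam * r k) n m h hh hhl
  have main : ∀ ε : ℝ, 0 < ε →
      infGammaF (fun k => lam * l k) (fun k => lam * r k) n h ≤
        lam * (I + ε) + (I + ε) ^ lam := by
    intro ε hε
    obtain ⟨x, hxS, hxlt⟩ := Real.lt_sInf_add_pos hS₀ne hε
    obtain ⟨m, hm, rfl⟩ := hxS
    have h1 : infGammaF (fun k => lam * l k) (fun k => lam * r k) n h ≤
        GammaF (fun k => lam * l k) (fun k => lam * r k) n m h := by
      rw [hIS']
      exact csInf_le hS'bdd ⟨m, hm, rfl⟩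
    have h2 : GammaF (fun k => lam * l k) (fun k => lam * r k) n m h ≤
        lam * GammaF l r n m h₀ + GammaF l r n m h₀ ^ lam := by
      rw [← hlh]
      exact gamma_scale l r lam hlam n m h₀ hh0 hhn
    have hGle : GammaF l r n m h₀ ≤ I + ε := by
      rw [hIS]
      exact le_of_lt hxlt
    have hG0 : 0 ≤ GammaF l r n m h₀ := gamma_nonneg l r n m h₀ hh0 hhn
    have h3 : GammaF l r n m h₀ ^ lam ≤ (I + ε) ^ lam :=
      Real.rpow_le_rpow hG0 hGle hlam0.le
    have h4 : lam * GammaF l r n m h₀ ≤ lam * (I + ε) :=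
      mul_le_mul_of_nonneg_left hGle hlam0.le
    linarith
  have hlim : Tendsto (fun ε : ℝ => lam * (I + ε) + (I + ε) ^ lam) (𝓝[>] (0:ℝ))
      (𝓝 (lam * I + I ^ lam)) := by
    have c1 : ContinuousAt (fun ε : ℝ => I + ε) 0 := by fun_prop
    have c2 : ContinuousAt (fun x : ℝ => x ^ lam) (I + 0) :=
      Real.continuousAt_rpow_const _ _ (Or.inr hlam0.le)
    have hc : ContinuousAt (fun ε : ℝ => lam * (I + ε) + (I + ε) ^ lam) 0 :=
      (continuousAt_const.mul c1).add (c2.comp c1)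
    have := hc.tendsto
    simp only [add_zero] at this
    exact this.mono_left nhdsWithin_le_nhds
  have hfin : infGammaF (fun k => lam * l k) (fun k => lam * r k) n h ≤
      lam * I + I ^ lam := by
    refine ge_of_tendsto hlim ?_
    filter_upwards [self_mem_nhdsWithin] with ε hε
    exact main ε hε
  have hK0 : 0 ≤ sSup (KSetF l r) := le_trans hI0 hIK
  have h5 : I ^ lam ≤ sSup (KSetF l r) ^ lam := Real.rpow_le_rpow hI0 hIK hlam0.le
  have h6 : lam * I ≤ lam * sSup (KSetF l r) := mul_le_mul_of_nonneg_left hIK hlam0.le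
  have h7 : 0 ≤ sSup (KSetF l r) ^ lam := Real.rpow_nonneg hK0 lam
  nlinarith
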